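/- arXiv:1508.02434 — 7 statements merged into one kernel-verified Lean document; each statement's English description precedes it below -/
import Mathlib

section
/- Let m > 0 be a real number and let σ ∈ {+1, −1}. The map k ↦ z_m(k) = m(1 + k²)/(1 − k²) is a bijection from the open quarter-plane {k ∈ ℂ : Re(k) > 0 and σ·Im(k) > 0} onto the open half-plane {z ∈ ℂ : σ·Im(z) > 0}. In particular, every z with Im(z) > 0 (resp. Im(z) < 0) equals z_m(k) for a unique k with Re(k) > 0 and Im(k) > 0 (resp. Im(k) < 0). -/
private lemma im_sq (k : ℂ) : (k ^ 2).im = 2 * k.re * k.im := by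
  simp [sq, Complex.mul_im]; ring

private lemma f_im (m : ℝ) (k : ℂ) :
    ((m : ℂ) * (1 + k ^ 2) / (1 - k ^ 2)).im
      = 2 * m * (k ^ 2).im / Complex.normSq (1 - k ^ 2) := by
  rw [Complex.div_im]
  simp [Complex.mul_im, Complex.mul_re, Complex.sub_re, Complex.sub_im,
    Complex.add_re, Complex.add_im]
  ring

private lemma w_im (m : ℝ) (z : ℂ) :
    ((z - m) / (z + m)).im = 2 * m * z.im / Complex.normSq (z + m) := by
  rw [Complex.div_im]
  simp [Complex.sub_re, Complex.sub_im, Complex.add_re, Complex.add_im]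
  ring

/-- For `m > 0` and `σ ∈ {+1, -1}`, the map
`k ↦ z_m(k) = m(1 + k²)/(1 - k²)` is a bijection from the open quarter-plane
`{k : Re k > 0, σ·Im k > 0}` onto the half-plane `{z : σ·Im z > 0}`.  In particular,
every `z` with `σ·Im z > 0` equals `z_m(k)` for a unique `k` in that quarter-plane. -/
theorem z_m_bijOn_quarter_plane (m σ : ℝ) (hm : 0 < m) (hσ : σ = 1 ∨ σ = -1) :
    Set.BijOn (fun k : ℂ => (m : ℂ) * (1 + k ^ 2) / (1 - k ^ 2))
      {k : ℂ | 0 < k.re ∧ 0 < σ * k.im}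
      {z : ℂ | 0 < σ * z.im}
    ∧ ∀ z : ℂ, 0 < σ * z.im →
        ∃! k : ℂ, (0 < k.re ∧ 0 < σ * k.im)
          ∧ z = (m : ℂ) * (1 + k ^ 2) / (1 - k ^ 2) := by
  have hσ0 : σ ≠ 0 := by rcases hσ with h | h <;> simp [h]
  -- for k in the quarter plane, 1 - k^2 ≠ 0
  have hden : ∀ k : ℂ, 0 < k.re → k.im ≠ 0 → (1 : ℂ) - k ^ 2 ≠ 0 := by
    intro k hre him h
    have h2 : (k ^ 2).im = 0 := by
      have : k ^ 2 = 1 := by linear_combination -h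
      rw [this]; simp
    rw [im_sq] at h2
    rcases mul_eq_zero.1 h2 with h3 | h3
    · rcases mul_eq_zero.1 h3 with h4 | h4
      · norm_num at h4
      · exact absurd h4 hre.ne'
    · exact him h3
  have himne : ∀ x : ℝ, 0 < σ * x → x ≠ 0 := by
    intro x hx h; rw [h, mul_zero] at hx; exact lt_irrefl 0 hx
  -- MapsTo
  have hmaps : Set.MapsTo (fun k : ℂ => (m : ℂ) * (1 + k ^ 2) / (1 - k ^ 2))
      {k : ℂ | 0 < k.re ∧ 0 < σ * k.im} {z : ℂ | 0 < σ * z.im} := by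
    rintro k ⟨hre, him⟩
    have hk : (1 : ℂ) - k ^ 2 ≠ 0 := hden k hre (himne _ him)
    have hns : 0 < Complex.normSq (1 - k ^ 2) := Complex.normSq_pos.2 hk
    show 0 < σ * ((m : ℂ) * (1 + k ^ 2) / (1 - k ^ 2)).im
    rw [f_im, im_sq]
    have : σ * (2 * m * (2 * k.re * k.im) / Complex.normSq (1 - k ^ 2))
        = (4 * m * k.re * (σ * k.im)) / Complex.normSq (1 - k ^ 2) := by ring
    rw [this]
    positivity
  -- InjOn
  have hinj : Set.InjOn (fun k : ℂ => (m : ℂ) * (1 + k ^ 2) / (1 - k ^ 2))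
      {k : ℂ | 0 < k.re ∧ 0 < σ * k.im} := by
    rintro k₁ ⟨hre₁, him₁⟩ k₂ ⟨hre₂, him₂⟩ heq
    have h1 : (1 : ℂ) - k₁ ^ 2 ≠ 0 := hden k₁ hre₁ (himne _ him₁)
    have h2 : (1 : ℂ) - k₂ ^ 2 ≠ 0 := hden k₂ hre₂ (himne _ him₂)
    have hm' : (m : ℂ) ≠ 0 := by exact_mod_cast hm.ne'
    simp only at heq
    rw [div_eq_div_iff h1 h2] at heq
    have hsq : k₁ ^ 2 = k₂ ^ 2 := by
      have h2m : (2 * m : ℂ) ≠ 0 := by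
        simpa using hm'
      have : (k₁ ^ 2 - k₂ ^ 2) * (2 * m) = 0 := by linear_combination heq
      rcases mul_eq_zero.1 this with h | h
      · linear_combination h
      · exact absurd h h2m
    have hsum : k₁ + k₂ ≠ 0 := by
      intro h
      have : (k₁ + k₂).re = 0 := by rw [h]; simp
      rw [Complex.add_re] at this
      linarith
    have : (k₁ - k₂) * (k₁ + k₂) = 0 := by linear_combination hsq
    rcases mul_eq_zero.1 this with h | h
    · linear_combination h
    · exact absurd h hsum
  -- SurjOn
  have hsurj : ∀ z : ℂ, 0 < σ * z.im →
      ∃ k : ℂ, (0 < k.re ∧ 0 < σ * k.im)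
        ∧ z = (m : ℂ) * (1 + k ^ 2) / (1 - k ^ 2) := by
    intro z hz
    have hzim : z.im ≠ 0 := himne _ hz
    have hzm : z + (m : ℂ) ≠ 0 := by
      intro h
      have : (z + (m : ℂ)).im = 0 := by rw [h]; simp
      simp [Complex.add_im] at this
      exact hzim this
    set w : ℂ := (z - m) / (z + m) with hw
    have hns : 0 < Complex.normSq (z + m) := Complex.normSq_pos.2 hzm
    have hwim : σ * w.im > 0 := by
      rw [hw, w_im]
      have : σ * (2 * m * z.im / Complex.normSq (z + m))
          = 2 * m * (σ * z.im) / Complex.normSq (z + m) := by ring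
      rw [this]; positivity
    have hwim0 : w.im ≠ 0 := himne _ hwim
    obtain ⟨k₀, hk₀⟩ := IsAlgClosed.exists_pow_nat_eq w (n := 2) (by norm_num)
    have hre0 : k₀.re ≠ 0 := by
      intro h
      apply hwim0
      rw [← hk₀, im_sq, h]; ring
    set k : ℂ := if 0 < k₀.re then k₀ else -k₀ with hkdef
    have hksq : k ^ 2 = w := by
      rw [hkdef]; split_ifs with h
      · exact hk₀
      · rw [neg_sq]; exact hk₀
    have hkre : 0 < k.re := by
      rw [hkdef]; split_ifs with h
      · exact h
      · rw [Complex.neg_re]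
        rcases hre0.lt_or_gt with h' | h'
        · linarith
        · exact absurd h' h
    have hkim : 0 < σ * k.im := by
      have h2 : σ * (k ^ 2).im > 0 := by rw [hksq]; exact hwim
      rw [im_sq] at h2
      by_contra h
      push_neg at h
      have : σ * (2 * k.re * k.im) = 2 * k.re * (σ * k.im) := by ring
      rw [this] at h2
      nlinarith
    refine ⟨k, ⟨hkre, hkim⟩, ?_⟩
    have h1 : (1 : ℂ) - k ^ 2 ≠ 0 := hden k hkre (himne _ hkim)
    have hm' : (m : ℂ) ≠ 0 := by exact_mod_cast hm.ne'
    rw [hksq] at h1 ⊢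
    rw [eq_div_iff h1, hw]
    field_simp
    ring
  refine ⟨⟨hmaps, hinj, ?_⟩, ?_⟩
  · intro z hz
    obtain ⟨k, hk, hzk⟩ := hsurj z hz
    exact ⟨k, hk, hzk.symm⟩
  · intro z hz
    obtain ⟨k, hk, hzk⟩ := hsurj z hz
    refine ⟨k, ⟨hk, hzk⟩, ?_⟩
    rintro k' ⟨hk', hzk'⟩
    exact hinj hk' hk (hzk'.symm.trans hzk)
end

section
/- Let m > 0 be a real number and let σ ∈ {+1, −1}. The map k ↦ z_{−m}(k) = −m(1 + k²)/(1 − k²) is a bijection from the open quarter-plane {k ∈ ℂ : Re(k) > 0 and σ·Im(k) > 0} onto the open half-plane {z ∈ ℂ : σ·Im(z) < 0}. In particular, every z with Im(z) > 0 equals z_{−m}(k) for a unique k with Re(k) > 0 and Im(k) < 0. -/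
lemma aux_d_ne (k : ℂ) (hre : 0 < k.re) (him : k.im ≠ 0) : 1 - k ^ 2 ≠ 0 := by
  intro h
  have h2 : (1 - k ^ 2).im = 0 := by rw [h]; simp
  simp only [Complex.sub_im, Complex.one_im, sq, Complex.mul_im, zero_sub, neg_eq_zero] at h2
  exact mul_ne_zero (ne_of_gt hre) him (by linarith)

lemma aux_f_im (m : ℝ) (k : ℂ) (hd : 1 - k ^ 2 ≠ 0) :
    ((-(m : ℂ) * (1 + k ^ 2) / (1 - k ^ 2)).im)
      = -4 * m * k.re * k.im / Complex.normSq (1 - k ^ 2) := by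
  have hN : Complex.normSq (1 - k ^ 2) ≠ 0 := by
    simpa [Complex.normSq_eq_zero] using hd
  rw [Complex.div_im]
  simp only [Complex.normSq_apply, Complex.sub_re, Complex.sub_im, Complex.one_re,
    Complex.one_im, Complex.mul_re, Complex.mul_im, Complex.add_re, Complex.add_im,
    Complex.neg_re, Complex.neg_im, Complex.ofReal_re, Complex.ofReal_im, sq]
  field_simp
  ring

lemma aux_w_im (m : ℝ) (z : ℂ) (hzm : z - (m : ℂ) ≠ 0) :
    (((z + m) / (z - m)).im) = -2 * m * z.im / Complex.normSq (z - m) := by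
  have hN : Complex.normSq (z - (m : ℂ)) ≠ 0 := by
    simpa [Complex.normSq_eq_zero] using hzm
  rw [Complex.div_im]
  simp only [Complex.normSq_apply, Complex.sub_re, Complex.sub_im, Complex.add_re,
    Complex.add_im, Complex.ofReal_re, Complex.ofReal_im]
  field_simp
  ring

lemma aux_bij (m σ : ℝ) (hm : 0 < m) (hσ : σ = 1 ∨ σ = -1) :
    Set.BijOn (fun k : ℂ => -(m : ℂ) * (1 + k ^ 2) / (1 - k ^ 2))
      {k : ℂ | 0 < k.re ∧ 0 < σ * k.im}
      {z : ℂ | σ * z.im < 0} := by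
  have hσ0 : σ ≠ 0 := by rcases hσ with h | h <;> rw [h] <;> norm_num
  have hσsq : σ * σ = 1 := by rcases hσ with h | h <;> rw [h] <;> norm_num
  refine ⟨?_, ?_, ?_⟩
  · -- MapsTo
    rintro k ⟨hre, him⟩
    have him0 : k.im ≠ 0 := by
      intro h; rw [h, mul_zero] at him; exact lt_irrefl 0 him
    have hd : 1 - k ^ 2 ≠ 0 := aux_d_ne k hre him0
    have hN : 0 < Complex.normSq (1 - k ^ 2) := Complex.normSq_pos.mpr hd
    show σ * _ < 0
    simp only
    rw [aux_f_im m k hd]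
    have : σ * (-4 * m * k.re * k.im / Complex.normSq (1 - k ^ 2))
        = -4 * m * k.re * (σ * k.im) / Complex.normSq (1 - k ^ 2) := by ring
    rw [this]
    apply div_neg_of_neg_of_pos _ hN
    nlinarith [mul_pos (mul_pos hm hre) him]
  · -- InjOn
    rintro k₁ ⟨hre₁, him₁⟩ k₂ ⟨hre₂, him₂⟩ h
    have him01 : k₁.im ≠ 0 := by
      intro hh; rw [hh, mul_zero] at him₁; exact lt_irrefl 0 him₁
    have him02 : k₂.im ≠ 0 := by
      intro hh; rw [hh, mul_zero] at him₂; exact lt_irrefl 0 him₂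
    have hd₁ : 1 - k₁ ^ 2 ≠ 0 := aux_d_ne k₁ hre₁ him01
    have hd₂ : 1 - k₂ ^ 2 ≠ 0 := aux_d_ne k₂ hre₂ him02
    simp only at h
    rw [div_eq_div_iff hd₁ hd₂] at h
    have hmC : (m : ℂ) ≠ 0 := by exact_mod_cast hm.ne'
    have h3 : (2 * (m : ℂ)) * (k₁ ^ 2 - k₂ ^ 2) = 0 := by linear_combination -h
    have h4 : k₁ ^ 2 = k₂ ^ 2 := by
      rcases mul_eq_zero.mp h3 with h' | h'
      · exact absurd h' (by simpa using hmC)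
      · linear_combination h'
    have h5 : (k₁ - k₂) * (k₁ + k₂) = 0 := by linear_combination h4
    rcases mul_eq_zero.mp h5 with h' | h'
    · exact sub_eq_zero.mp h'
    · exfalso
      have := congrArg Complex.re h'
      simp only [Complex.add_re, Complex.zero_re] at this
      linarith
  · -- SurjOn
    rintro z hz
    have hz' : σ * z.im < 0 := hz
    have hzim : z.im ≠ 0 := by
      intro h; rw [h, mul_zero] at hz'; exact lt_irrefl 0 hz'
    have hzm : z - (m : ℂ) ≠ 0 := by
      intro h
      have : z.im = 0 := by
        have := congrArg Complex.im h
        simpa [Complex.sub_im] using this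
      exact hzim this
    set w : ℂ := (z + m) / (z - m) with hw
    have hNzm : 0 < Complex.normSq (z - (m : ℂ)) := Complex.normSq_pos.mpr hzm
    have hwim : σ * w.im > 0 := by
      rw [hw, aux_w_im m z hzm]
      have : σ * (-2 * m * z.im / Complex.normSq (z - (m:ℂ)))
          = -2 * m * (σ * z.im) / Complex.normSq (z - (m:ℂ)) := by ring
      rw [this]
      apply div_pos _ hNzm
      nlinarith
    have hwim0 : w.im ≠ 0 := by
      intro h; rw [h, mul_zero] at hwim; exact lt_irrefl 0 hwim
    have habs : |w.re| < ‖w‖ := Complex.abs_re_lt_norm.mpr hwim0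
    have hpa : 0 < ‖w‖ + w.re := by
      have := neg_abs_le w.re; linarith
    set p : ℝ := Real.sqrt ((‖w‖ + w.re) / 2) with hpdef
    have hp : 0 < p := Real.sqrt_pos.mpr (by linarith)
    have hp2 : p ^ 2 = (‖w‖ + w.re) / 2 := Real.sq_sqrt (by linarith)
    set q : ℝ := w.im / (2 * p) with hqdef
    set k : ℂ := ⟨p, q⟩ with hk
    have hkre : k.re = p := rfl
    have hkim : k.im = q := rfl
    have hb2 : w.im ^ 2 = ‖w‖ ^ 2 - w.re ^ 2 := by
      have := Complex.sq_norm w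
      rw [Complex.normSq_apply] at this
      nlinarith
    have hk2 : k ^ 2 = w := by
      apply Complex.ext
      · show (k ^ 2).re = w.re
        rw [sq, Complex.mul_re, hkre, hkim]
        have h2p : (2 * p) ≠ 0 := by positivity
        rw [hqdef]
        field_simp
        linear_combination (4 * p ^ 2 + 2 * ‖w‖ - 2 * w.re) * hp2 - hb2
      · show (k ^ 2).im = w.im
        rw [sq, Complex.mul_im, hkre, hkim, hqdef]
        field_simp
        ring
    refine ⟨k, ⟨?_, ?_⟩, ?_⟩
    · rw [hkre]; exact hp
    · rw [hkim, hqdef]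
      have : σ * (w.im / (2 * p)) = (σ * w.im) / (2 * p) := by ring
      rw [this]
      positivity
    · show -(m : ℂ) * (1 + k ^ 2) / (1 - k ^ 2) = z
      rw [hk2, hw]
      have hmC : (m : ℂ) ≠ 0 := by exact_mod_cast hm.ne'
      have h1w : (1 : ℂ) - (z + m) / (z - m) ≠ 0 := by
        rw [hw] at hwim0
        intro h
        have : ((z + m) / (z - m)) = 1 := by linear_combination -h
        rw [this] at hwim0
        simp at hwim0
      rw [div_eq_iff h1w]
      field_simp
      ring

/-- For `m > 0` and `σ ∈ {+1, -1}`, the map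
`k ↦ z_{-m}(k) = -m(1 + k²)/(1 - k²)` is a bijection from the open quarter-plane
`{k : Re k > 0, σ·Im k > 0}` onto the half-plane `{z : σ·Im z < 0}`.  In particular,
every `z` with `Im z > 0` equals `z_{-m}(k)` for a unique `k` with `Re k > 0`,
`Im k < 0`. -/
theorem z_neg_m_bijOn_quarter_plane (m σ : ℝ) (hm : 0 < m) (hσ : σ = 1 ∨ σ = -1) :
    Set.BijOn (fun k : ℂ => -(m : ℂ) * (1 + k ^ 2) / (1 - k ^ 2))
      {k : ℂ | 0 < k.re ∧ 0 < σ * k.im}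
      {z : ℂ | σ * z.im < 0}
    ∧ ∀ z : ℂ, 0 < z.im →
        ∃! k : ℂ, (0 < k.re ∧ k.im < 0)
          ∧ z = -(m : ℂ) * (1 + k ^ 2) / (1 - k ^ 2) := by
  refine ⟨aux_bij m σ hm hσ, ?_⟩
  intro z hz
  have hbij := aux_bij m (-1) hm (Or.inr rfl)
  have hzT : z ∈ {z : ℂ | (-1 : ℝ) * z.im < 0} := by
    simp only [Set.mem_setOf_eq]; linarith
  obtain ⟨k, hkS, hkz⟩ := hbij.surjOn hzT
  obtain ⟨hkre, hkim⟩ := hkS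
  refine ⟨k, ⟨⟨hkre, by linarith⟩, hkz.symm⟩, ?_⟩
  rintro k' ⟨⟨hkre', hkim'⟩, hz'⟩
  exact hbij.injOn ⟨hkre', by linarith⟩ ⟨hkre, hkim⟩ (by simpa using hz'.symm.trans hkz.symm)
end

section
/- Let z ∈ ℂ with z ∉ [0, +∞), and let ζ ∈ ℂ satisfy ζ² = z and Im(ζ) > 0. Let f : ℝ → ℂ be continuous with compact support, and define u : ℝ → ℂ by u(x) = (i/(2ζ)) ∫_ℝ e^{iζ|x − y|} f(y) dy. Then u is twice differentiable on ℝ and satisfies −u''(x) − z·u(x) = f(x) for all x ∈ ℝ. -/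
open MeasureTheory

lemma aux_hasDerivAt_integral_Iic (g : ℝ → ℂ) (hg : Continuous g)
    (hgs : HasCompactSupport g) (x : ℝ) :
    HasDerivAt (fun t => ∫ y in Set.Iic t, g y) (g x) x := by
  have hint : Integrable g := hg.integrable_of_hasCompactSupport hgs
  have key : ∀ t : ℝ, ∫ y in Set.Iic t, g y
      = (∫ y in Set.Iic 0, g y) + ∫ y in (0:ℝ)..t, g y := by
    intro t
    rw [← intervalIntegral.integral_Iic_sub_Iic hint.integrableOn hint.integrableOn]
    ring
  have hF : HasDerivAt (fun t => (∫ y in Set.Iic 0, g y) + ∫ y in (0:ℝ)..t, g y) (g x) x :=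
    (intervalIntegral.integral_hasDerivAt_right
      (hint.intervalIntegrable)
      hg.aestronglyMeasurable.stronglyMeasurableAtFilter hg.continuousAt).const_add _
  exact hF.congr_of_eventuallyEq (Filter.Eventually.of_forall key)

lemma aux_hasDerivAt_cexp (ζ : ℂ) (x : ℝ) :
    HasDerivAt (fun t : ℝ => Complex.exp (Complex.I * ζ * (t : ℝ)))
      (Complex.I * ζ * Complex.exp (Complex.I * ζ * (x : ℝ))) x := by
  have h1 : HasDerivAt (fun t : ℝ => (t : ℂ)) 1 x := Complex.ofRealCLM.hasDerivAt
  have h2 : HasDerivAt (fun t : ℝ => Complex.I * ζ * (t : ℝ)) (Complex.I * ζ) x := by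
    simpa using h1.const_mul (Complex.I * ζ)
  simpa [mul_comm] using h2.cexp

/-- Let `z ∉ [0, +∞)`, and let `ζ` satisfy `ζ² = z`, `Im ζ > 0`.
For `f : ℝ → ℂ` continuous with compact support, the function
`u(x) = (i/(2ζ)) ∫ e^{iζ|x - y|} f(y) dy` is twice differentiable and satisfies
`-u'' - z·u = f` on `ℝ`. -/
theorem resolvent_kernel_one_dim_laplacian (z ζ : ℂ)
    (hz : ∀ x : ℝ, 0 ≤ x → z ≠ (x : ℂ))
    (hζ : ζ ^ 2 = z) (hζim : 0 < ζ.im)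
    (f : ℝ → ℂ) (hf : Continuous f) (hsupp : HasCompactSupport f) :
    ∀ u : ℝ → ℂ,
      (u = fun x : ℝ =>
        (Complex.I / (2 * ζ)) * ∫ y : ℝ, Complex.exp (Complex.I * ζ * (|x - y| : ℝ)) * f y) →
      (∀ x : ℝ, DifferentiableAt ℝ u x)
      ∧ (∀ x : ℝ, DifferentiableAt ℝ (deriv u) x)
      ∧ (∀ x : ℝ, -(deriv (deriv u) x) - z * u x = f x) := by
  intro u hu
  have hζ0 : ζ ≠ 0 := by
    intro h; rw [h] at hζim; simp at hζim
  set c : ℂ := Complex.I / (2 * ζ) with hc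
  set gm : ℝ → ℂ := fun y => Complex.exp (-(Complex.I * ζ * (y : ℝ))) * f y with hgm
  set gp : ℝ → ℂ := fun y => Complex.exp (Complex.I * ζ * (y : ℝ)) * f y with hgp
  have hgmc : Continuous gm := (Complex.continuous_exp.comp (by continuity)).mul hf
  have hgpc : Continuous gp := (Complex.continuous_exp.comp (by continuity)).mul hf
  have hgms : HasCompactSupport gm := hsupp.mul_left
  have hgps : HasCompactSupport gp := hsupp.mul_left
  have hgmi : Integrable gm := hgmc.integrable_of_hasCompactSupport hgms
  have hgpi : Integrable gp := hgpc.integrable_of_hasCompactSupport hgps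
  set A : ℝ → ℂ := fun x => ∫ y in Set.Iic x, gm y with hA
  set B : ℝ → ℂ := fun x => ∫ y in Set.Ici x, gp y with hB
  set E : ℝ → ℂ := fun x => Complex.exp (Complex.I * ζ * (x : ℝ)) with hE
  set Em : ℝ → ℂ := fun x => Complex.exp (-(Complex.I * ζ * (x : ℝ))) with hEm
  have hEEm : ∀ x, E x * Em x = 1 := by
    intro x
    rw [hE, hEm, ← Complex.exp_add]
    simp
  -- key splitting of u
  have hukey : ∀ x : ℝ, u x = c * (E x * A x + Em x * B x) := by
    intro x
    have hkc : Continuous fun y : ℝ => Complex.exp (Complex.I * ζ * (|x - y| : ℝ)) * f y :=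
      (Complex.continuous_exp.comp (by continuity)).mul hf
    have hks : HasCompactSupport fun y : ℝ =>
        Complex.exp (Complex.I * ζ * (|x - y| : ℝ)) * f y := hsupp.mul_left
    have hki : Integrable fun y : ℝ => Complex.exp (Complex.I * ζ * (|x - y| : ℝ)) * f y :=
      hkc.integrable_of_hasCompactSupport hks
    have hsplit := intervalIntegral.integral_Iic_add_Ioi (b := x)
      hki.integrableOn hki.integrableOn
    have hleft : ∫ y in Set.Iic x, Complex.exp (Complex.I * ζ * (|x - y| : ℝ)) * f y
        = Complex.exp (Complex.I * ζ * (x : ℝ)) * ∫ y in Set.Iic x, gm y := by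
      rw [← MeasureTheory.integral_const_mul]
      apply MeasureTheory.setIntegral_congr_fun measurableSet_Iic
      intro y hy
      dsimp only
      simp only [hgm]
      have habs : |x - y| = x - y := abs_of_nonneg (sub_nonneg.2 hy)
      have harg : Complex.I * ζ * ((x - y : ℝ) : ℂ)
          = Complex.I * ζ * (x : ℝ) + -(Complex.I * ζ * (y : ℝ)) := by push_cast; ring
      rw [habs, harg, Complex.exp_add]
      ring
    have hright : ∫ y in Set.Ioi x, Complex.exp (Complex.I * ζ * (|x - y| : ℝ)) * f y
        = Complex.exp (-(Complex.I * ζ * (x : ℝ))) * ∫ y in Set.Ici x, gp y := by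
      rw [MeasureTheory.integral_Ici_eq_integral_Ioi, ← MeasureTheory.integral_const_mul]
      apply MeasureTheory.setIntegral_congr_fun measurableSet_Ioi
      intro y hy
      dsimp only
      simp only [hgp]
      have habs : |x - y| = y - x := by
        rw [abs_sub_comm]; exact abs_of_nonneg (sub_nonneg.2 hy.le)
      have harg : Complex.I * ζ * ((y - x : ℝ) : ℂ)
          = -(Complex.I * ζ * (x : ℝ)) + Complex.I * ζ * (y : ℝ) := by push_cast; ring
      rw [habs, harg, Complex.exp_add]
      ring
    rw [hu]
    show c * (∫ y : ℝ, Complex.exp (Complex.I * ζ * (|x - y| : ℝ)) * f y) = _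
    rw [← hsplit, hleft, hright]
  have huu : u = fun x => c * (E x * A x + Em x * B x) := funext hukey
  -- derivatives of A and B
  have hdA : ∀ x : ℝ, HasDerivAt A (gm x) x :=
    fun x => aux_hasDerivAt_integral_Iic gm hgmc hgms x
  have hdB : ∀ x : ℝ, HasDerivAt B (-(gp x)) x := by
    intro x
    have hBalt : B = fun t => (∫ y : ℝ, gp y) - ∫ y in Set.Iic t, gp y := by
      funext t
      show (∫ y in Set.Ici t, gp y) = (∫ y : ℝ, gp y) - ∫ y in Set.Iic t, gp y
      rw [eq_sub_iff_add_eq, MeasureTheory.integral_Ici_eq_integral_Ioi, add_comm]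
      exact intervalIntegral.integral_Iic_add_Ioi hgpi.integrableOn hgpi.integrableOn
    rw [hBalt]
    exact (aux_hasDerivAt_integral_Iic gp hgpc hgps x).const_sub _
  have hdE : ∀ x : ℝ, HasDerivAt E (Complex.I * ζ * E x) x :=
    fun x => aux_hasDerivAt_cexp ζ x
  have hdEm : ∀ x : ℝ, HasDerivAt Em (-(Complex.I * ζ) * Em x) x := by
    intro x
    have h1 : HasDerivAt (fun t : ℝ => (t : ℂ)) 1 x := Complex.ofRealCLM.hasDerivAt
    have h2 : HasDerivAt (fun t : ℝ => -(Complex.I * ζ * (t : ℝ))) (-(Complex.I * ζ)) x := by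
      have h3 := (h1.const_mul (Complex.I * ζ)).neg
      rw [mul_one] at h3
      exact h3
    simpa [hEm, mul_comm] using h2.cexp
  -- simplifications
  have hEgm : ∀ x, E x * gm x = f x := by
    intro x
    rw [hE, hgm, ← mul_assoc, ← Complex.exp_add]
    simp
  have hEmgp : ∀ x, Em x * gp x = f x := by
    intro x
    rw [hEm, hgp, ← mul_assoc, ← Complex.exp_add]
    simp
  -- first derivative
  set v : ℝ → ℂ := fun x => c * (Complex.I * ζ) * (E x * A x - Em x * B x) with hv
  have hdu : ∀ x : ℝ, HasDerivAt u (v x) x := by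
    intro x
    rw [huu]
    have := ((((hdE x).mul (hdA x)).add ((hdEm x).mul (hdB x))).const_mul c)
    convert this using 1
    · rfl
    · rfl
    have h1 := hEgm x
    have h2 := hEmgp x
    simp only [hv]
    rw [h1, mul_neg, h2]
    ring
  have hderivu : deriv u = v := funext fun x => (hdu x).deriv
  -- second derivative
  have hdv : ∀ x : ℝ, HasDerivAt v (-(z * u x) - f x) x := by
    intro x
    have := ((((hdE x).mul (hdA x)).sub ((hdEm x).mul (hdB x))).const_mul
      (c * (Complex.I * ζ)))
    convert this using 1
    · rfl
    · rfl
    have h1 := hEgm x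
    have h2 := hEmgp x
    have h3 := hukey x
    have hc2 : c * (Complex.I * ζ) * 2 = -1 := by
      rw [hc]
      field_simp
      linear_combination Complex.I_mul_I
    have hz2 : (Complex.I * ζ) * (Complex.I * ζ) = -z := by
      linear_combination ζ ^ 2 * Complex.I_mul_I - hζ
    -- goal: -(z*u x) - f x = c*(I*ζ)*((I*ζ*E*A + E*gm) - (-(I*ζ)*Em*B + Em*(-gp)))
    rw [h3]
    have expand : c * (Complex.I * ζ) *
        (Complex.I * ζ * E x * A x + E x * gm x -
          (-(Complex.I * ζ) * Em x * B x + Em x * -gp x))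
        = (Complex.I * ζ) * (Complex.I * ζ) * (c * (E x * A x + Em x * B x))
          + (c * (Complex.I * ζ) * 2) * f x := by
      rw [h1, mul_neg, h2]; ring
    rw [expand, hc2, hz2]
    ring
  have hderivv : ∀ x : ℝ, deriv v x = -(z * u x) - f x := fun x => (hdv x).deriv
  refine ⟨fun x => (hdu x).differentiableAt, ?_, ?_⟩
  · intro x
    rw [hderivu]
    exact (hdv x).differentiableAt
  · intro x
    rw [hderivu, hderivv x]
    ring
end

section
/- Let 0 < r < R be real numbers, and let g : ℂ → ℂ be continuous on the closed disc {z : |z| ≤ R}, holomorphic on the open disc {z : |z| < R}, with g(0) ≠ 0. Then the set Z of zeros of g in the closed disc {z : |z| ≤ r} is finite, and the number N of such zeros counted with multiplicity (the sum over Z of the vanishing orders of g) satisfies N ≤ (log(R/r))^{−1} · ( log( sup_{|z| = R} |g(z)| ) − log |g(0)| ). -/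
open Metric

/-- (Jensen-type bound on the number of zeros.)  For `0 < r < R` and
`g` continuous on the closed disc of radius `R`, holomorphic on the open disc, with
`g 0 ≠ 0`, the set of zeros of `g` in the closed disc of radius `r` is finite, and the
number of zeros counted with multiplicity is at most
`(log(R/r))⁻¹ (log sup_{|z|=R} |g| - log |g 0|)`. -/
theorem jensen_zero_count (r R : ℝ) (hr : 0 < r) (hrR : r < R) (g : ℂ → ℂ)
    (hc : ContinuousOn g (closedBall (0 : ℂ) R))
    (hd : DifferentiableOn ℂ g (ball (0 : ℂ) R))
    (h0 : g 0 ≠ 0) :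
    ∃ Z : Finset ℂ,
      (∀ z : ℂ, z ∈ Z ↔ z ∈ closedBall (0 : ℂ) r ∧ g z = 0)
      ∧ ∀ n : ℂ → ℕ,
          (∀ z ∈ Z, ∃ h : ℂ → ℂ, AnalyticAt ℂ h z ∧ h z ≠ 0
            ∧ ∀ᶠ w in nhds z, g w = (w - z) ^ n z * h w) →
          ((∑ z ∈ Z, n z : ℕ) : ℝ)
            ≤ (Real.log (R / r))⁻¹
              * (Real.log (sSup ((fun z => ‖g z‖) '' sphere (0 : ℂ) R))
                  - Real.log (‖g 0‖)) := by
  classical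
  have hR : (0:ℝ) < R := hr.trans hrR
  have hga : AnalyticOnNhd ℂ g (ball (0:ℂ) R) := hd.analyticOnNhd isOpen_ball
  have hsub : closedBall (0:ℂ) r ⊆ ball (0:ℂ) R := closedBall_subset_ball hrR
  -- finiteness of the zero set
  have hfin : Set.Finite {z : ℂ | z ∈ closedBall (0:ℂ) r ∧ g z = 0} := by
    by_contra hinf
    obtain ⟨z₀, hz₀K, hz₀⟩ := Set.Infinite.exists_accPt_of_subset_isCompact hinf
      (isCompact_closedBall (0:ℂ) r) (fun z hz => hz.1)
    rw [accPt_iff_frequently] at hz₀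
    have hfr : ∃ᶠ z in nhdsWithin z₀ {z₀}ᶜ, g z = 0 := by
      rw [frequently_nhdsWithin_iff]
      exact hz₀.mono fun z hz => ⟨hz.2.2, hz.1⟩
    have := hga.eqOn_zero_of_preconnected_of_frequently_eq_zero
      (convex_ball (0:ℂ) R).isPreconnected (hsub hz₀K) hfr
    exact h0 (this (mem_ball_self hR))
  refine ⟨hfin.toFinset, fun z => hfin.mem_toFinset, ?_⟩
  set Z := hfin.toFinset with hZdef
  have hZmem : ∀ z : ℂ, z ∈ Z ↔ z ∈ closedBall (0:ℂ) r ∧ g z = 0 :=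
    fun z => hfin.mem_toFinset
  intro n hn
  choose! h hha hh0 hheq using hn
  set N := ∑ z ∈ Z, n z with hNdef
  -- positivity of multiplicities
  have hnpos : ∀ z ∈ Z, 0 < n z := by
    intro z hz
    rcases Nat.eq_zero_or_pos (n z) with h' | h'
    · exfalso
      have := (hheq z hz).self_of_nhds
      rw [h', pow_zero, one_mul] at this
      exact hh0 z hz (this ▸ (hZmem z).1 hz |>.2)
    · exact h'
  set P : ℂ → ℂ := fun w => ∏ z ∈ Z, (w - z) ^ n z with hPdef
  set φ : ℂ → ℂ := fun w =>
    if hw : w ∈ Z then h w w / ∏ z ∈ Z.erase w, (w - z) ^ n z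
    else g w / P w with hφdef
  have hPd : Differentiable ℂ P := by
    apply Differentiable.fun_finsetProd
    intro z _
    exact ((differentiable_id.sub_const z).pow _)
  have hPne : ∀ w : ℂ, w ∉ Z → P w ≠ 0 := by
    intro w hw
    exact Finset.prod_ne_zero_iff.mpr fun z hz =>
      pow_ne_zero _ (sub_ne_zero.mpr (fun e => hw (e ▸ hz)))
  -- g = φ * P
  have hgP : ∀ w : ℂ, g w = φ w * P w := by
    intro w
    by_cases hw : w ∈ Z
    · have hg0' : g w = 0 := ((hZmem w).1 hw).2
      have : P w = 0 := Finset.prod_eq_zero hw (by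
        rw [sub_self]; exact zero_pow (hnpos w hw).ne')
      rw [hg0', this, mul_zero]
    · simp only [hφdef, dif_neg hw]
      rw [div_mul_cancel₀ _ (hPne w hw)]
  -- local description of φ near z ∈ Z
  have hφloc : ∀ z ∈ Z, φ =ᶠ[nhds z]
      fun w => h z w / ∏ z' ∈ Z.erase z, (w - z') ^ n z' := by
    intro z hz
    have h2 : ∀ᶠ w in nhds z, w ∉ (↑(Z.erase z) : Set ℂ) := by
      have : IsOpen ((↑(Z.erase z) : Set ℂ))ᶜ :=
        (Z.erase z).finite_toSet.isClosed.isOpen_compl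
      exact this.mem_nhds (by simp)
    filter_upwards [hheq z hz, h2] with w hw1 hw2
    by_cases hwz : w = z
    · subst hwz; simp only [hφdef, dif_pos hz]
    · have hwZ : w ∉ Z := fun hmem => hw2 (Finset.mem_erase.mpr ⟨hwz, hmem⟩)
      simp only [hφdef, dif_neg hwZ, hPdef]
      rw [← Finset.mul_prod_erase Z _ hz, hw1,
        mul_div_mul_left _ _ (pow_ne_zero _ (sub_ne_zero.mpr hwz))]
  -- the local model is nice at z
  have hmodel : ∀ z ∈ Z, AnalyticAt ℂ
      (fun w => h z w / ∏ z' ∈ Z.erase z, (w - z') ^ n z') z := by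
    intro z hz
    apply (hha z hz).div
    · apply Finset.analyticAt_fun_prod
      intro z' _
      exact ((analyticAt_id.sub analyticAt_const).pow _)
    · exact Finset.prod_ne_zero_iff.mpr fun z' hz' =>
        pow_ne_zero _ (sub_ne_zero.mpr fun e =>
          (Finset.mem_erase.mp hz').1 e.symm)
  -- φ matches g / P away from Z
  have hevout : ∀ w : ℂ, w ∉ Z → φ =ᶠ[nhds w] fun x => g x / P x := by
    intro w hwZ
    have hop : IsOpen ((↑Z : Set ℂ))ᶜ := Z.finite_toSet.isClosed.isOpen_compl
    filter_upwards [hop.mem_nhds (by simpa using hwZ)] with x hx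
    simp only [hφdef]
    rw [dif_neg (by simpa using hx)]
  -- φ differentiable on the open ball
  have hφdiff : DifferentiableOn ℂ φ (ball (0:ℂ) R) := by
    intro w hw
    by_cases hwZ : w ∈ Z
    · exact (((hmodel w hwZ).congr (hφloc w hwZ).symm).differentiableAt).differentiableWithinAt
    · exact (((hd.differentiableAt (isOpen_ball.mem_nhds hw)).div
        hPd.differentiableAt (hPne w hwZ)).congr_of_eventuallyEq
          (hevout w hwZ)).differentiableWithinAt
  -- φ continuous on the closed ball
  have hφcont : ContinuousOn φ (closedBall (0:ℂ) R) := by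
    intro w hw
    by_cases hwZ : w ∈ Z
    · exact (((hmodel w hwZ).congr (hφloc w hwZ).symm).continuousAt).continuousWithinAt
    · have hcw : ContinuousWithinAt (fun x => g x / P x) (closedBall (0:ℂ) R) w :=
        (hc.continuousWithinAt hw).div hPd.continuous.continuousWithinAt (hPne w hwZ)
      exact hcw.congr_of_eventuallyEq
        ((hevout w hwZ).filter_mono nhdsWithin_le_nhds) (hevout w hwZ).self_of_nhds
  -- the Blaschke-type factor
  set Q : ℂ → ℂ := fun w => ∏ z ∈ Z, (((R:ℂ)^2 - (starRingEnd ℂ) z * w) / R) ^ n z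
    with hQdef
  have hQd : Differentiable ℂ Q := by
    apply Differentiable.fun_finsetProd
    intro z _
    exact (((differentiable_const _).sub
      ((differentiable_const _).mul differentiable_id)).div_const _).pow _
  set F : ℂ → ℂ := fun w => φ w * Q w with hFdef
  have hFdc : DiffContOnCl ℂ F (ball (0:ℂ) R) := by
    refine ⟨hφdiff.mul hQd.differentiableOn, ?_⟩
    rw [closure_ball _ hR.ne']
    exact hφcont.mul hQd.continuous.continuousOn
  set M := sSup ((fun z => ‖g z‖) '' sphere (0:ℂ) R) with hMdef
  have hbdd : BddAbove ((fun z => ‖g z‖) '' sphere (0:ℂ) R) :=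
    ((isCompact_sphere (0:ℂ) R).image_of_continuousOn
      (continuous_norm.comp_continuousOn
        (hc.mono sphere_subset_closedBall))).bddAbove
  have hM : ∀ w ∈ sphere (0:ℂ) R, ‖g w‖ ≤ M :=
    fun w hw => le_csSup hbdd ⟨w, hw, rfl⟩
  -- boundary modulus of F equals that of g
  have habs : ∀ w ∈ sphere (0:ℂ) R, ‖F w‖ = ‖g w‖ := by
    intro w hw
    have hwR : ‖w‖ = R := by
      simpa using mem_sphere_zero_iff_norm.mp hw
    have key : ∀ z ∈ Z,
        ‖((R:ℂ)^2 - (starRingEnd ℂ) z * w) / R‖ = ‖w - z‖ := by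
      intro z _
      have h1 : ((R:ℂ)^2 - (starRingEnd ℂ) z * w) = (starRingEnd ℂ) (w - z) * w := by
        rw [map_sub, sub_mul]
        congr 1
        rw [mul_comm]
        rw [Complex.mul_conj, Complex.normSq_eq_norm_sq, hwR]
        push_cast
        ring
      rw [norm_div, h1, norm_mul, Complex.norm_conj, hwR, Complex.norm_real, Real.norm_eq_abs,
        abs_of_pos hR, mul_div_cancel_right₀ _ hR.ne']
    have hQP : ‖Q w‖ = ‖P w‖ := by
      simp only [hQdef, hPdef, norm_prod, norm_pow]
      exact Finset.prod_congr rfl fun z hz => by rw [key z hz]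
    calc ‖F w‖ = ‖φ w‖ * ‖Q w‖ := norm_mul _ _
      _ = ‖φ w‖ * ‖P w‖ := by rw [hQP]
      _ = ‖φ w * P w‖ := (norm_mul _ _).symm
      _ = ‖g w‖ := by rw [← hgP w]
  -- maximum modulus principle
  have hF0 : ‖F 0‖ ≤ M := by
    have hfr : ∀ z ∈ frontier (ball (0:ℂ) R), ‖F z‖ ≤ M := by
      rw [frontier_ball _ hR.ne']
      intro z hz
      rw [habs z hz]
      exact hM z hz
    exact Complex.norm_le_of_forall_mem_frontier_norm_le isBounded_ball hFdc hfr
      (by rw [closure_ball _ hR.ne']; exact mem_closedBall_self hR.le)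
  -- value at 0
  have hQ0 : Q 0 = (R:ℂ) ^ N := by
    simp only [hQdef]
    rw [Finset.prod_congr rfl (fun z _ => by
      rw [mul_zero, sub_zero, sq, mul_div_assoc,
        div_self (by exact_mod_cast hR.ne' : (R:ℂ) ≠ 0), mul_one])]
    exact Finset.prod_pow_eq_pow_sum Z n _
  have hF0val : ‖F 0‖ = ‖φ 0‖ * R ^ N := by
    show ‖φ 0 * Q 0‖ = _
    rw [norm_mul, hQ0, norm_pow, Complex.norm_real, Real.norm_eq_abs, abs_of_pos hR]
  have hg0le : ‖g 0‖ ≤ ‖φ 0‖ * r ^ N := by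
    rw [hgP 0, norm_mul]
    refine mul_le_mul_of_nonneg_left ?_ (norm_nonneg _)
    have : ‖P 0‖ = ∏ z ∈ Z, ‖z‖ ^ n z := by
      simp only [hPdef, norm_prod, norm_pow, zero_sub, norm_neg]
    rw [this]
    calc ∏ z ∈ Z, ‖z‖ ^ n z ≤ ∏ z ∈ Z, r ^ n z := by
          refine Finset.prod_le_prod (fun z _ => by positivity) fun z hz => ?_
          refine pow_le_pow_left₀ (norm_nonneg _) ?_ _
          have := ((hZmem z).1 hz).1
          rwa [mem_closedBall_zero_iff] at this
      _ = r ^ N := Finset.prod_pow_eq_pow_sum Z n r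
  have hφ0 : 0 < ‖φ 0‖ := by
    refine norm_pos_iff.mpr fun e => h0 ?_
    rw [hgP 0, e, zero_mul]
  have hMpos : 0 < M := lt_of_lt_of_le (by rw [hF0val] at *; positivity) (hF0val ▸ hF0)
  have hg0pos : 0 < ‖g 0‖ := norm_pos_iff.mpr h0
  have hkey : ‖g 0‖ * (R / r) ^ N ≤ M := by
    have hrRr : r * (R / r) = R := by field_simp
    calc ‖g 0‖ * (R/r)^N
        ≤ (‖φ 0‖ * r ^ N) * (R/r)^N :=
          mul_le_mul_of_nonneg_right hg0le (by positivity)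
      _ = ‖φ 0‖ * R ^ N := by rw [mul_assoc, ← mul_pow, hrRr]
      _ = ‖F 0‖ := hF0val.symm
      _ ≤ M := hF0
  have hratio : ((R/r) ^ N : ℝ) ≤ M / ‖g 0‖ := by
    rw [le_div_iff₀ hg0pos]
    linarith [hkey]
  have hlog : (N:ℝ) * Real.log (R/r) ≤ Real.log M - Real.log (‖g 0‖) := by
    have h1 : Real.log ((R/r) ^ N) ≤ Real.log (M / ‖g 0‖) :=
      Real.log_le_log (by positivity) hratio
    rwa [Real.log_pow, Real.log_div hMpos.ne' hg0pos.ne'] at h1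
  have hlogpos : 0 < Real.log (R/r) := Real.log_pos ((one_lt_div hr).mpr hrR)
  rw [inv_mul_eq_div, le_div_iff₀ hlogpos]
  exact hlog
end

section
/- Let H be a complex Hilbert space and let B : H → H be a bounded self-adjoint operator with B ≥ 0 (i.e. ⟨Bu, u⟩ ≥ 0 for all u ∈ H). Let k, Φ ∈ ℂ \ {0}, let J ∈ {+1, −1}, and set w := k/Φ. Assume that Re(w) ≠ 0 or J·Im(w) > 0. Then the operator I + (iJΦ/k)·B is boundedly invertible and ‖(I + (iJΦ/k)·B)^{−1}‖ ≤ |w| / sqrt( ((J·Im(w))₊)² + (Re(w))² ), where t₊ := max(t, 0) for t ∈ ℝ. -/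
/-- Let `B ≥ 0` be a bounded nonnegative self-adjoint operator on a
complex Hilbert space, `k, Φ ∈ ℂ \ {0}`, `J ∈ {+1, -1}`, `w := k/Φ`, and assume
`Re w ≠ 0` or `J·Im w > 0`.  Then `I + (iJΦ/k)·B` is boundedly invertible with
`‖(I + (iJΦ/k)·B)⁻¹‖ ≤ |w| / sqrt(((J·Im w)₊)² + (Re w)²)`. -/
theorem inverse_bound_nonneg_selfadjoint
    {H : Type*} [NormedAddCommGroup H] [InnerProductSpace ℂ H] [CompleteSpace H]
    (B : H →L[ℂ] H) (hB : IsSelfAdjoint B)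
    (hBpos : ∀ u : H, 0 ≤ (inner ℂ (B u) u : ℂ).re)
    (k Φ : ℂ) (hk : k ≠ 0) (hΦ : Φ ≠ 0) (J : ℝ) (hJ : J = 1 ∨ J = -1)
    (hw : (k / Φ).re ≠ 0 ∨ 0 < J * (k / Φ).im) :
    ∃ C : H →L[ℂ] H,
      C * (1 + (Complex.I * (J : ℂ) * Φ / k) • B) = 1
      ∧ (1 + (Complex.I * (J : ℂ) * Φ / k) • B) * C = 1
      ∧ ‖C‖ ≤ ‖k / Φ‖
          / Real.sqrt ((max (J * (k / Φ).im) 0) ^ 2 + ((k / Φ).re) ^ 2) := by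
  set w : ℂ := k / Φ with hwdef
  set a : ℂ := Complex.I * (J : ℂ) * Φ / k with hadef
  have hJ2 : J * J = 1 := by rcases hJ with h | h <;> rw [h] <;> norm_num
  have hwa : w * a = Complex.I * (J : ℂ) := by
    rw [hwdef, hadef]
    field_simp
  set c : ℝ := Real.sqrt ((max (J * w.im) 0) ^ 2 + w.re ^ 2) with hcdef
  have hcpos : 0 < c := by
    apply Real.sqrt_pos.2
    rcases hw with h | h
    · have : 0 < w.re ^ 2 := by positivity
      nlinarith [sq_nonneg (max (J * w.im) 0)]
    · have h2 : max (J * w.im) 0 = J * w.im := max_eq_left h.le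
      rw [h2]
      nlinarith [sq_nonneg w.re]
  have hwne : w ≠ 0 := div_ne_zero hk hΦ
  have hwabs : 0 < ‖w‖ := norm_pos_iff.mpr hwne
  set T : H →L[ℂ] H := 1 + a • B with hTdef
  -- key coercivity estimate
  have key : ∀ u : H, c * ‖u‖ ^ 2 ≤ ‖w‖ * ‖inner ℂ u (T u)‖ := by
    intro u
    set b : ℝ := (inner ℂ (B u) u : ℂ).re with hbdef
    have hbnn : 0 ≤ b := hBpos u
    have hsym : (inner ℂ (B u) u : ℂ) = inner ℂ u (B u) :=
      hB.isSymmetric u u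
    have hconj : (starRingEnd ℂ) (inner ℂ u (B u) : ℂ) = inner ℂ u (B u) := by
      rw [inner_conj_symm]; exact hsym
    have hbreal : (inner ℂ u (B u) : ℂ) = (b : ℂ) := by
      rw [hbdef, hsym]
      exact (Complex.conj_eq_iff_re.1 hconj).symm
    set r : ℝ := ‖u‖ ^ 2 with hrdef
    have hrnn : 0 ≤ r := by positivity
    have hTu : (inner ℂ u (T u) : ℂ) = (r : ℝ) + a * b := by
      rw [hTdef]
      simp only [ContinuousLinearMap.add_apply, ContinuousLinearMap.one_apply,
        ContinuousLinearMap.coe_smul', Pi.smul_apply, inner_add_right, inner_smul_right]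
      rw [hbreal, hrdef]
      congr 1
      exact_mod_cast inner_self_eq_norm_sq_to_K u
    have hwT : w * inner ℂ u (T u) = w * (r : ℝ) + Complex.I * (J : ℂ) * (b : ℝ) := by
      rw [hTu]; rw [mul_add, ← mul_assoc, hwa]
    have hre : (w * inner ℂ u (T u)).re = w.re * r := by
      rw [hwT]; simp
    have him : (w * inner ℂ u (T u)).im = w.im * r + J * b := by
      rw [hwT]; simp
    have habs : ‖w‖ * ‖inner ℂ u (T u)‖
        = Real.sqrt ((w.re * r) ^ 2 + (w.im * r + J * b) ^ 2) := by
      rw [← norm_mul, Complex.norm_def, Complex.normSq_apply, hre, him]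
      ring_nf
    rw [habs]
    have hcr : c * r = Real.sqrt (((max (J * w.im) 0) ^ 2 + w.re ^ 2) * r ^ 2) := by
      rw [Real.sqrt_mul (by positivity), Real.sqrt_sq hrnn, hcdef]
    rw [hcr]
    apply Real.sqrt_le_sqrt
    have hsq : (max (J * w.im) 0 * r) ^ 2 ≤ (w.im * r + J * b) ^ 2 := by
      rcases le_or_gt (J * w.im) 0 with h | h
      · rw [max_eq_right h]
        nlinarith [sq_nonneg (w.im * r + J * b)]
      · rw [max_eq_left h.le]
        have h1 : (w.im * r + J * b) ^ 2 = (J * w.im * r + b) ^ 2 := by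
          rcases hJ with hj | hj <;> rw [hj] <;> ring
        rw [h1]
        nlinarith [mul_nonneg (mul_nonneg h.le hrnn) hbnn, mul_nonneg h.le hrnn]
    nlinarith [sq_nonneg (w.re * r)]
  have key2 : ∀ u : H, c * ‖u‖ ≤ ‖w‖ * ‖T u‖ := by
    intro u
    rcases eq_or_ne u 0 with rfl | hu
    · simp
    · have hun : 0 < ‖u‖ := norm_pos_iff.2 hu
      have hcs : ‖inner ℂ u (T u)‖ ≤ ‖u‖ * ‖T u‖ := by
        simpa using norm_inner_le_norm (𝕜 := ℂ) u (T u)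
      have := key u
      have h2 : c * ‖u‖ ^ 2 ≤ ‖w‖ * (‖u‖ * ‖T u‖) := by
        calc c * ‖u‖ ^ 2 ≤ ‖w‖ * ‖inner ℂ u (T u)‖ := this
        _ ≤ ‖w‖ * (‖u‖ * ‖T u‖) := by
            exact mul_le_mul_of_nonneg_left hcs hwabs.le
      nlinarith
  -- antilipschitz
  have hanti : AntilipschitzWith (Real.toNNReal (‖w‖ / c)) T := by
    apply ContinuousLinearMap.antilipschitz_of_bound
    intro x
    have := key2 x
    rw [Real.coe_toNNReal _ (by positivity)]
    rw [div_mul_eq_mul_div, le_div_iff₀ hcpos]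
    nlinarith
  -- dense range
  have hdense : T.range.topologicalClosure = ⊤ := by
    rw [Submodule.topologicalClosure_eq_top_iff]
    rw [Submodule.eq_bot_iff]
    intro v hv
    have h0 : (inner ℂ (T v) v : ℂ) = 0 := hv (T v) (LinearMap.mem_range_self _ v)
    have h0' : (inner ℂ v (T v) : ℂ) = 0 := by
      rw [← inner_conj_symm, h0, map_zero]
    have hk2 : c * ‖v‖ ^ 2 ≤ 0 := by
      have h3 := key v
      rwa [h0', norm_zero, mul_zero] at h3
    by_contra hvne
    have hvp : 0 < ‖v‖ := norm_pos_iff.2 hvne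
    have h4 : 0 < c * ‖v‖ ^ 2 := mul_pos hcpos (pow_pos hvp 2)
    linarith
  have hbij : Function.Bijective T :=
    (ContinuousLinearMap.bijective_iff_dense_range_and_antilipschitz T).2 ⟨hdense, ⟨_, hanti⟩⟩
  have hker : T.ker = ⊥ := LinearMap.ker_eq_bot.2 hbij.1
  have hrange : T.range = ⊤ := LinearMap.range_eq_top.2 hbij.2
  set e := ContinuousLinearEquiv.ofBijective T hker hrange with hedef
  refine ⟨(e.symm : H →L[ℂ] H), ?_, ?_, ?_⟩
  · ext x
    simp only [ContinuousLinearMap.mul_apply, ContinuousLinearMap.one_apply,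
      ContinuousLinearEquiv.coe_coe]
    exact ContinuousLinearEquiv.ofBijective_symm_apply_apply T hker hrange x
  · ext x
    simp only [ContinuousLinearMap.mul_apply, ContinuousLinearMap.one_apply,
      ContinuousLinearEquiv.coe_coe]
    exact ContinuousLinearEquiv.ofBijective_apply_symm_apply T hker hrange x
  · apply ContinuousLinearMap.opNorm_le_bound _ (by positivity)
    intro v
    set u : H := e.symm v with hudef
    have hTu : T u = v := ContinuousLinearEquiv.ofBijective_apply_symm_apply T hker hrange v
    have := key2 u
    rw [hTu] at this
    rw [ContinuousLinearEquiv.coe_coe, ← hudef]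
    rw [div_mul_eq_mul_div, le_div_iff₀ hcpos]
    nlinarith
end

section
/- Let H be a complex Hilbert space and let B : H → H be a bounded self-adjoint operator with B ≥ 0 (i.e. ⟨Bu, u⟩ ≥ 0 for all u ∈ H). Let δ > 0, let J ∈ {+1, −1}, let k, Φ ∈ ℂ \ {0}, and assume that k/Φ lies in the cone C_δ(J), i.e. −δ·J·Im(k/Φ) ≤ |Re(k/Φ)|. Then the operator I + (iJΦ/k)·B is boundedly invertible and ‖(I + (iJΦ/k)·B)^{−1}‖ ≤ sqrt(1 + δ^{−2}). -/
private lemma key_scalar (δ : ℝ) (hδ : 0 < δ) (w : ℂ) (hw : -(δ * w.re) ≤ |w.im|)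
    (n t : ℝ) (hn : 0 ≤ n) (ht : 0 ≤ t) :
    (Real.sqrt (1 + (δ ^ 2)⁻¹))⁻¹ * n ≤ ‖((n : ℂ) + w * t)‖ := by
  have hs : (0:ℝ) < 1 + (δ ^ 2)⁻¹ := by positivity
  have hab : ‖((n : ℂ) + w * t)‖
      = Real.sqrt ((n + w.re * t) ^ 2 + (w.im * t) ^ 2) := by
    rw [Complex.norm_def]
    congr 1
    simp [Complex.normSq_apply]
    ring
  rw [hab, Real.le_sqrt (by positivity) (by positivity)]
  have hkey : δ ^ 2 * n ^ 2 ≤ (δ ^ 2 + 1) * ((n + w.re * t) ^ 2 + (w.im * t) ^ 2) := by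
    rcases le_or_gt 0 w.re with h | h
    · nlinarith [sq_nonneg (w.im * t), sq_nonneg (w.re * t), sq_nonneg n,
        mul_nonneg (mul_nonneg hn h) ht, sq_nonneg δ]
    · have h2 : δ ^ 2 * w.re ^ 2 ≤ w.im ^ 2 := by
        have h3 : δ * (-w.re) ≤ |w.im| := by linarith
        have h4 : (δ * (-w.re)) ^ 2 ≤ |w.im| ^ 2 := by
          apply pow_le_pow_left₀ (by nlinarith) h3
        rw [sq_abs] at h4; nlinarith
      nlinarith [sq_nonneg (n + (1 + δ ^ 2) * w.re * t), sq_nonneg t,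
        mul_nonneg (sq_nonneg t) (sub_nonneg.mpr h2)]
  have hinv : ((Real.sqrt (1 + (δ ^ 2)⁻¹))⁻¹ * n) ^ 2 = (1 + (δ ^ 2)⁻¹)⁻¹ * n ^ 2 := by
    rw [mul_pow, ← Real.sqrt_inv, Real.sq_sqrt (by positivity)]
  rw [hinv, inv_mul_le_iff₀ hs]
  have hδ2 : (0:ℝ) < δ ^ 2 := by positivity
  rw [← mul_le_mul_iff_right₀ hδ2]
  calc δ ^ 2 * n ^ 2 ≤ (δ ^ 2 + 1) * ((n + w.re * t) ^ 2 + (w.im * t) ^ 2) := hkey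
    _ = δ ^ 2 * ((1 + (δ ^ 2)⁻¹) * ((n + w.re * t) ^ 2 + (w.im * t) ^ 2)) := by
        field_simp

private lemma cone_z (δ J : ℝ) (hJ : J = 1 ∨ J = -1) (w : ℂ) (hw : w ≠ 0)
    (hcone : -(δ * J * w.im) ≤ |w.re|) :
    -(δ * (Complex.I * (J:ℂ) * w⁻¹).re) ≤ |(Complex.I * (J:ℂ) * w⁻¹).im| := by
  have hN : 0 < Complex.normSq w := Complex.normSq_pos.mpr hw
  have hre : (Complex.I * (J:ℂ) * w⁻¹).re = J * w.im / Complex.normSq w := by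
    simp [Complex.inv_re, Complex.inv_im, Complex.mul_re, Complex.mul_im]
    ring
  have him : (Complex.I * (J:ℂ) * w⁻¹).im = J * w.re / Complex.normSq w := by
    simp [Complex.inv_re, Complex.inv_im, Complex.mul_re, Complex.mul_im]
    ring
  rw [hre, him, abs_div, abs_of_pos hN]
  have hJabs : |J * w.re| = |w.re| := by rcases hJ with h | h <;> simp [h]
  rw [hJabs]
  have h1 : -(δ * (J * w.im / Complex.normSq w)) = -(δ * J * w.im) / Complex.normSq w := by
    ring
  rw [h1]
  gcongr

/-- Let `B ≥ 0` be a bounded nonnegative self-adjoint operator on a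
complex Hilbert space, `δ > 0`, `J ∈ {+1, -1}`, `k, Φ ∈ ℂ \ {0}` with `k/Φ` in the cone
`C_δ(J) = {w : -δ·J·Im w ≤ |Re w|}`.  Then `I + (iJΦ/k)·B` is boundedly invertible with
`‖(I + (iJΦ/k)·B)⁻¹‖ ≤ sqrt(1 + δ⁻²)`. -/
theorem inverse_bound_nonneg_selfadjoint_cone
    {H : Type*} [NormedAddCommGroup H] [InnerProductSpace ℂ H] [CompleteSpace H]
    (B : H →L[ℂ] H) (hB : IsSelfAdjoint B)
    (hBpos : ∀ u : H, 0 ≤ (inner ℂ (B u) u : ℂ).re)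
    (δ : ℝ) (hδ : 0 < δ) (J : ℝ) (hJ : J = 1 ∨ J = -1)
    (k Φ : ℂ) (hk : k ≠ 0) (hΦ : Φ ≠ 0)
    (hcone : -(δ * J * (k / Φ).im) ≤ |(k / Φ).re|) :
    ∃ C : H →L[ℂ] H,
      C * (1 + (Complex.I * (J : ℂ) * Φ / k) • B) = 1
      ∧ (1 + (Complex.I * (J : ℂ) * Φ / k) • B) * C = 1
      ∧ ‖C‖ ≤ Real.sqrt (1 + (δ ^ 2)⁻¹) := by
  set z : ℂ := Complex.I * (J : ℂ) * Φ / k with hz_def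
  have hw0 : k / Φ ≠ 0 := div_ne_zero hk hΦ
  have hz2 : z = Complex.I * (J : ℂ) * (k / Φ)⁻¹ := by
    rw [hz_def, inv_div, mul_div_assoc]
  have hzre : -(δ * z.re) ≤ |z.im| := by
    rw [hz2]; exact cone_z δ J hJ (k / Φ) hw0 hcone
  set c : ℝ := (Real.sqrt (1 + (δ ^ 2)⁻¹))⁻¹ with hc_def
  have hcpos : 0 < c := by
    apply inv_pos.mpr; apply Real.sqrt_pos.mpr; positivity
  set A : H →L[ℂ] H := 1 + z • B with hA_def
  -- coercivity in modulus
  have hinner : ∀ u : H, c * ‖u‖ ^ 2 ≤ ‖(inner ℂ (A u) u : ℂ)‖ := by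
    intro u
    have h1 : A u = u + z • B u := by
      simp [hA_def, ContinuousLinearMap.add_apply]
    have hreal : (inner ℂ (B u) u : ℂ) = (((inner ℂ (B u) u : ℂ).re : ℝ) : ℂ) := by
      have hsym := hB.isSymmetric u u
      have hc : (inner ℂ (B u) u : ℂ) = starRingEnd ℂ (inner ℂ (B u) u : ℂ) :=
        hsym.trans (inner_conj_symm u (B u)).symm
      exact (Complex.conj_eq_iff_re.mp hc.symm).symm
    have h2 : (inner ℂ (A u) u : ℂ)
        = ((‖u‖ ^ 2 : ℝ) : ℂ) + starRingEnd ℂ z * (((inner ℂ (B u) u : ℂ).re : ℝ) : ℂ) := by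
      rw [h1, inner_add_left, inner_smul_left, inner_self_eq_norm_sq_to_K, ← hreal]
      norm_cast
    rw [h2]
    have hzc : -(δ * (starRingEnd ℂ z).re) ≤ |(starRingEnd ℂ z).im| := by
      simpa using hzre
    exact key_scalar δ hδ (starRingEnd ℂ z) hzc (‖u‖ ^ 2) _ (by positivity) (hBpos u)
  have hlow : ∀ u : H, c * ‖u‖ ≤ ‖A u‖ := by
    intro u
    rcases eq_or_ne u 0 with rfl | hu
    · simp
    · have h1 := hinner u
      have h2 : ‖(inner ℂ (A u) u : ℂ)‖ ≤ ‖A u‖ * ‖u‖ := by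
        exact norm_inner_le_norm _ _
      have hu0 : 0 < ‖u‖ := norm_pos_iff.mpr hu
      have h3 := h1.trans h2
      rw [pow_two, ← mul_assoc] at h3
      exact le_of_mul_le_mul_right h3 hu0
  have hanti : AntilipschitzWith (⟨c, hcpos.le⟩ : NNReal)⁻¹ A := by
    apply ContinuousLinearMap.antilipschitz_of_bound
    intro x
    have h1 := hlow x
    show ‖x‖ ≤ c⁻¹ * ‖A x‖
    rw [le_inv_mul_iff₀ (by exact_mod_cast hcpos)]
    exact_mod_cast h1
  have hker : LinearMap.ker (A : H →ₗ[ℂ] H) = ⊥ := by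
    rw [LinearMap.ker_eq_bot]
    exact hanti.injective
  have hclosed : IsClosed (LinearMap.range (A : H →ₗ[ℂ] H) : Set H) :=
    hanti.isClosed_range A.uniformContinuous
  have hrange : LinearMap.range (A : H →ₗ[ℂ] H) = ⊤ := by
    haveI := hclosed.completeSpace_coe
    rw [← (LinearMap.range (A : H →ₗ[ℂ] H)).orthogonal_orthogonal]
    rw [Submodule.eq_top_iff']
    intro v w mem_w_orthogonal
    obtain rfl : w = 0 := by
      have h0 : (inner ℂ (A w) w : ℂ) = 0 := mem_w_orthogonal _ ⟨w, rfl⟩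
      have h1 := hinner w
      rw [h0] at h1
      simp only [norm_zero] at h1
      have h2 : ‖w‖ ^ 2 ≤ 0 := by nlinarith
      have h3 : ‖w‖ = 0 := by nlinarith [sq_nonneg ‖w‖, norm_nonneg w]
      simpa using h3
    exact inner_zero_left _
  let E := ContinuousLinearEquiv.ofBijective A hker hrange
  refine ⟨E.symm.toContinuousLinearMap, ?_, ?_, ?_⟩
  · ext u
    exact ContinuousLinearEquiv.ofBijective_symm_apply_apply A hker hrange u
  · ext u
    exact ContinuousLinearEquiv.ofBijective_apply_symm_apply A hker hrange u
  · apply ContinuousLinearMap.opNorm_le_bound _ (Real.sqrt_nonneg _)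
    intro y
    have h1 : c * ‖E.symm y‖ ≤ ‖A (E.symm y)‖ := hlow _
    have h2 : A (E.symm y) = y :=
      ContinuousLinearEquiv.ofBijective_apply_symm_apply A hker hrange y
    rw [h2] at h1
    calc ‖E.symm.toContinuousLinearMap y‖ = ‖E.symm y‖ := rfl
      _ ≤ c⁻¹ * ‖y‖ := by rw [← inv_mul_le_iff₀ (inv_pos.mpr hcpos)]; simpa using h1
      _ = Real.sqrt (1 + (δ ^ 2)⁻¹) * ‖y‖ := by rw [hc_def, inv_inv]
end

section
/- Let (μ_j)_{j ∈ ℕ} be a nonincreasing sequence of positive real numbers such that for every ρ ∈ (0, 1) one has μ_j / ρ^j → 0 as j → ∞ (super-exponential decay). Then for every ν ∈ (0, 1) the set { j ∈ ℕ : μ_j − μ_{j+1} > ν·μ_j } is infinite. -/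
open Filter

/-- If `(μ_j)` is a nonincreasing sequence of positive reals with
super-exponential decay (`μ_j/ρ^j → 0` for every `ρ ∈ (0,1)`), then for every
`ν ∈ (0,1)` there are infinitely many `j` with a relative gap `μ_j - μ_{j+1} > ν·μ_j`. -/
theorem superexponential_decay_infinitely_many_gaps
    (μ : ℕ → ℝ) (hpos : ∀ j, 0 < μ j) (hmono : Antitone μ)
    (hdecay : ∀ ρ : ℝ, 0 < ρ → ρ < 1 →
      Tendsto (fun j => μ j / ρ ^ j) atTop (nhds 0)) :
    ∀ ν : ℝ, 0 < ν → ν < 1 →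
      {j : ℕ | μ j - μ (j + 1) > ν * μ j}.Infinite := by
  intro ν hν0 hν1
  by_contra hfin
  rw [Set.not_infinite] at hfin
  obtain ⟨M, hM⟩ := hfin.bddAbove
  set N := M + 1 with hNdef
  have hN : ∀ j, N ≤ j → ¬ (μ j - μ (j + 1) > ν * μ j) := by
    intro j hj hmem
    have := hM hmem
    omega
  have hρ0 : (0:ℝ) < 1 - ν := by linarith
  have hρ1 : (1:ℝ) - ν < 1 := by linarith
  have key : ∀ k, (1 - ν) ^ k * μ N ≤ μ (N + k) := by
    intro k
    induction k with
    | zero => simp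
    | succ k ih =>
      have h := hN (N + k) (Nat.le_add_right _ _)
      push_neg at h
      have h2 : (1 - ν) * μ (N + k) ≤ μ (N + k + 1) := by linarith
      calc (1 - ν) ^ (k+1) * μ N = (1 - ν) * ((1 - ν) ^ k * μ N) := by ring
        _ ≤ (1 - ν) * μ (N + k) := by nlinarith
        _ ≤ μ (N + k + 1) := h2
        _ = μ (N + (k + 1)) := by rw [Nat.add_assoc]
  set c : ℝ := μ N / (1 - ν) ^ N with hc
  have hcpos : 0 < c := div_pos (hpos N) (pow_pos hρ0 N)
  have hd := hdecay (1 - ν) hρ0 hρ1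
  have hev : ∀ᶠ j in atTop, μ j / (1 - ν) ^ j < c :=
    hd.eventually (gt_mem_nhds hcpos)
  obtain ⟨j, hjN, hjlt⟩ := ((eventually_ge_atTop N).and hev).exists
  obtain ⟨k, rfl⟩ := Nat.exists_eq_add_of_le hjN
  have hkey := key k
  have hpow : (1 - ν) ^ (N + k) = (1 - ν) ^ N * (1 - ν) ^ k := pow_add _ _ _
  have hppos : 0 < (1 - ν) ^ (N + k) := pow_pos hρ0 _
  have : c ≤ μ (N + k) / (1 - ν) ^ (N + k) := by
    rw [hc, div_le_div_iff₀ (pow_pos hρ0 N) hppos, hpow]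
    nlinarith [pow_pos hρ0 k, hpos N]
  linarith [hjlt]
end
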